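/- Let A(x,y) = ℂ(x,y) with Poisson bracket determined by {x,y} = x. An affine map φ(x) = α₁x + β₁y + γ₁, φ(y) = α₂x + β₂y + γ₂ with α₁β₂ ≠ α₂β₁ is a Poisson algebra automorphism of A(x,y) if and only if β₁ = 0, γ₁ = 0, and β₂ = 1, i.e. φ(x) = α₁x and φ(y) = α₂x + y + γ₂. -/

import Mathlib

set_option synthInstance.maxHeartbeats 1000000
set_option maxHeartbeats 1000000


open MvPolynomial

/-- A Poisson bracket on a commutative `ℂ`-algebra. -/
structure PoissonBracket (A : Type*) [CommRing A] [Algebra ℂ A] where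
  br : A →ₗ[ℂ] A →ₗ[ℂ] A
  antisymm : ∀ a b : A, br a b = - br b a
  leibniz : ∀ a b c : A, br a (b * c) = br a b * c + b * br a c
  jacobi : ∀ a b c : A, br a (br b c) + br b (br c a) + br c (br a b) = 0

/-- The field of rational functions `ℂ(x,y)`. -/
noncomputable abbrev Kxy : Type := FractionRing (MvPolynomial (Fin 2) ℂ)

noncomputable def xx : Kxy := algebraMap (MvPolynomial (Fin 2) ℂ) Kxy (X 0)
noncomputable def yy : Kxy := algebraMap (MvPolynomial (Fin 2) ℂ) Kxy (X 1)
noncomputable def cc (z : ℂ) : Kxy := algebraMap ℂ Kxy z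

lemma hC_cc (z : ℂ) : algebraMap (MvPolynomial (Fin 2) ℂ) Kxy (C z) = cc z := by
  rw [← MvPolynomial.algebraMap_eq, ← IsScalarTower.algebraMap_apply]; rfl

lemma dzero (d : Kxy → Kxy)
    (hadd : ∀ a b, d (a + b) = d a + d b)
    (hc : ∀ z : ℂ, d (cc z) = 0)
    (hL : ∀ a b, d (a * b) = d a * b + a * d b)
    (hx : d xx = 0) (hy : d yy = 0) : ∀ a, d a = 0 := by
  have hpoly : ∀ p : MvPolynomial (Fin 2) ℂ, d (algebraMap _ Kxy p) = 0 := by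
    intro p
    induction p using MvPolynomial.induction_on with
    | C z => rw [hC_cc, hc]
    | add p q hp hq => rw [map_add, hadd, hp, hq, add_zero]
    | mul_X p i hp =>
        have hX : d (algebraMap (MvPolynomial (Fin 2) ℂ) Kxy (X i)) = 0 := by
          fin_cases i
          · exact hx
          · exact hy
        rw [map_mul, hL, hp, zero_mul, zero_add, hX, mul_zero]
  intro a
  obtain ⟨⟨p, q⟩, h⟩ := IsLocalization.mk'_surjective (nonZeroDivisors (MvPolynomial (Fin 2) ℂ)) a
  have hspec : a * algebraMap _ Kxy (q : MvPolynomial (Fin 2) ℂ) = algebraMap _ Kxy p := by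
    rw [← h]; exact IsLocalization.mk'_spec _ p q
  have hd := hL a (algebraMap _ Kxy (q : MvPolynomial (Fin 2) ℂ))
  rw [hpoly, mul_zero, add_zero, hspec, hpoly] at hd
  have hq0 : algebraMap (MvPolynomial (Fin 2) ℂ) Kxy (q : MvPolynomial (Fin 2) ℂ) ≠ 0 :=
    IsFractionRing.to_map_ne_zero_of_mem_nonZeroDivisors q.2
  exact (mul_eq_zero.mp hd.symm).resolve_right hq0

lemma bracket_unique (F : Kxy → Kxy → Kxy)
    (hanti : ∀ a b, F a b = - F b a)
    (hadd₂ : ∀ a b b', F a (b + b') = F a b + F a b')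
    (hc₂ : ∀ (a : Kxy) (z : ℂ), F a (cc z) = 0)
    (hL₂ : ∀ a b c, F a (b * c) = F a b * c + b * F a c)
    (hxx : F xx xx = 0) (hxy : F xx yy = 0) (hyy : F yy yy = 0) :
    ∀ a b, F a b = 0 := by
  have hadd₁ : ∀ a a' b, F (a + a') b = F a b + F a' b := by
    intro a a' b; rw [hanti, hadd₂, neg_add, ← hanti, ← hanti]
  have hc₁ : ∀ (z : ℂ) (b : Kxy), F (cc z) b = 0 := by
    intro z b; rw [hanti, hc₂, neg_zero]
  have hL₁ : ∀ a b c, F (b * c) a = F b a * c + b * F c a := by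
    intro a b c
    rw [hanti, hL₂, hanti b a, hanti c a]; ring
  have step1 : ∀ a, F a xx = 0 := by
    refine dzero (fun a => F a xx) (fun a b => hadd₁ a b xx) (fun z => hc₁ z xx)
      (fun a b => hL₁ xx a b) hxx ?_
    show F yy xx = 0
    rw [hanti, hxy, neg_zero]
  have step2 : ∀ a, F a yy = 0 :=
    dzero (fun a => F a yy) (fun a b => hadd₁ a b yy) (fun z => hc₁ z yy)
      (fun a b => hL₁ yy a b) hxy hyy
  intro a
  exact dzero (F a) (hadd₂ a) (hc₂ a) (hL₂ a) (step1 a) (step2 a)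


/-- For `ℂ(x,y)` with the Poisson bracket determined by `{x,y} = x`,
an affine map `φ(x) = α₁x + β₁y + γ₁`, `φ(y) = α₂x + β₂y + γ₂` with
`α₁β₂ ≠ α₂β₁` is a Poisson algebra automorphism if and only if `β₁ = 0`,
`γ₁ = 0` and `β₂ = 1`, i.e. `φ(x) = α₁x` and `φ(y) = α₂x + y + γ₂`. -/
theorem stmt4 (B : PoissonBracket Kxy) (hB : B.br xx yy = xx)
    (α₁ β₁ γ₁ α₂ β₂ γ₂ : ℂ) (hd : α₁ * β₂ ≠ α₂ * β₁)
    (φ : Kxy ≃ₐ[ℂ] Kxy)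
    (hφx : φ xx = cc α₁ * xx + cc β₁ * yy + cc γ₁)
    (hφy : φ yy = cc α₂ * xx + cc β₂ * yy + cc γ₂) :
    (∀ a b : Kxy, φ (B.br a b) = B.br (φ a) (φ b)) ↔
      (β₁ = 0 ∧ γ₁ = 0 ∧ β₂ = 1) := by
  have hsm : ∀ (z : ℂ) (w : Kxy), cc z * w = z • w := fun z w => (Algebra.smul_def z w).symm
  have hcc : ∀ z : ℂ, cc z = z • (1 : Kxy) := fun z => Algebra.algebraMap_eq_smul_one z
  have hbr1r : ∀ a : Kxy, B.br a 1 = 0 := by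
    intro a
    have h := B.leibniz a 1 1
    rw [one_mul, mul_one, one_mul] at h
    exact (right_eq_add.mp h)
  have hbrc₁' : ∀ (z : ℂ) (a b : Kxy), B.br (cc z * a) b = cc z * B.br a b := by
    intro z a b; rw [hsm, hsm, map_smul, LinearMap.smul_apply]
  have hbrc₂' : ∀ (z : ℂ) (a b : Kxy), B.br a (cc z * b) = cc z * B.br a b := by
    intro z a b; rw [hsm, hsm, map_smul]
  have hbrcr : ∀ (a : Kxy) (z : ℂ), B.br a (cc z) = 0 := by
    intro a z
    rw [← mul_one (cc z), hbrc₂', hbr1r, mul_zero]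
  have hbrcl : ∀ (a : Kxy) (z : ℂ), B.br (cc z) a = 0 := fun a z => by
    rw [B.antisymm, hbrcr, neg_zero]
  have h2ne : (2 : Kxy) ≠ 0 := by
    intro hh
    have h1 : (algebraMap ℂ Kxy) 2 = (algebraMap ℂ Kxy) 0 := by
      rw [map_ofNat, map_zero]; exact hh
    exact two_ne_zero ((algebraMap ℂ Kxy).injective h1)
  have hbrself : ∀ a : Kxy, B.br a a = 0 := by
    intro a
    have h := B.antisymm a a
    have h2 : (2 : Kxy) * B.br a a = 0 := by
      rw [two_mul]; nth_rewrite 2 [h]; exact add_neg_cancel _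
    exact (mul_eq_zero.mp h2).resolve_left h2ne
  have hyx : B.br yy xx = -xx := by rw [B.antisymm, hB]
  have hbrc₁ := hbrc₁'
  have hbrc₂ := hbrc₂'
  constructor
  · intro h
    have key := h xx yy
    rw [hB, hφx, hφy] at key
    have e : cc (α₁ * β₂ - α₂ * β₁) = cc α₁ * cc β₂ - cc α₂ * cc β₁ := by
      simp only [cc, map_sub, map_mul]
    have expand : B.br (cc α₁ * xx + cc β₁ * yy + cc γ₁) (cc α₂ * xx + cc β₂ * yy + cc γ₂)
        = cc (α₁ * β₂ - α₂ * β₁) * xx := by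
      simp only [map_add, LinearMap.add_apply, hbrc₁, hbrc₂, hB, hbrself, hyx, hbrcr, hbrcl,
        mul_zero, add_zero, zero_add]
      rw [e]; ring
    rw [expand] at key
    have hinj := IsFractionRing.injective (MvPolynomial (Fin 2) ℂ) Kxy
    have keyP : (C α₁ * X 0 + C β₁ * X 1 + C γ₁ : MvPolynomial (Fin 2) ℂ)
        = C (α₁ * β₂ - α₂ * β₁) * X 0 := by
      apply hinj
      rw [map_add, map_add, map_mul, map_mul, map_mul, hC_cc, hC_cc, hC_cc, hC_cc]
      exact key
    have e00 := congrArg (eval (fun _ : Fin 2 => (0 : ℂ))) keyP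
    have e01 := congrArg (eval (fun i : Fin 2 => if i = 1 then (1 : ℂ) else 0)) keyP
    have e10 := congrArg (eval (fun i : Fin 2 => if i = 0 then (1 : ℂ) else 0)) keyP
    simp at e00 e01 e10
    have hβ₁ : β₁ = 0 := by rw [e00] at e01; simpa using e01
    have hα₁ : α₁ ≠ 0 := by
      intro h0
      apply hd
      rw [h0, hβ₁]; ring
    refine ⟨hβ₁, e00, ?_⟩
    rw [e00, hβ₁] at e10
    have : α₁ * 1 = α₁ * β₂ := by rw [mul_one]; linear_combination e10
    exact (mul_left_cancel₀ hα₁ this).symm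
  · rintro ⟨hb1, hg1, hb2⟩
    subst hb1; subst hg1; subst hb2
    have hcc0 : cc 0 = 0 := map_zero (algebraMap ℂ Kxy)
    have hcc1 : cc 1 = 1 := map_one (algebraMap ℂ Kxy)
    have hx' : φ xx = cc α₁ * xx := by
      rw [hφx, hcc0, zero_mul, add_zero, add_zero]
    have hy' : φ yy = cc α₂ * xx + yy + cc γ₂ := by
      rw [hφy, hcc1, one_mul]
    have hval : B.br (φ xx) (φ yy) = φ xx := by
      rw [hx', hy']
      simp only [map_add, LinearMap.add_apply, hbrc₁, hbrc₂, hB, hbrself, hbrcr,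
        mul_zero, add_zero, zero_add]
    have Fzero : ∀ a b : Kxy,
        B.br a b - φ.symm (B.br (φ a) (φ b)) = 0 := by
      apply bracket_unique
      · intro a b
        rw [B.antisymm a b, B.antisymm (φ a) (φ b), map_neg]; ring
      · intro a b b'
        simp only [map_add]; ring
      · intro a z
        rw [hbrcr, show φ (cc z) = cc z from φ.commutes z, hbrcr, map_zero, sub_zero]
      · intro a b c
        simp only [map_mul, B.leibniz, map_add, AlgEquiv.symm_apply_apply]
        ring
      · rw [hbrself, hbrself, map_zero, sub_zero]
      · rw [hB, hval, AlgEquiv.symm_apply_apply, sub_self]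
      · rw [hbrself, hbrself, map_zero, sub_zero]
    intro a b
    have h0 := Fzero a b
    rw [sub_eq_zero] at h0
    rw [h0, AlgEquiv.apply_symm_apply]
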